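/- Contiguous relation in n (equation (4.6)): For every integer n ≥ 0 and complex numbers q, a, b with q ≠ 0, a ≠ 0, b ≠ 0, such that all factors appearing in denominators below are nonzero, one has Σ_{k=0}^{n+1} (q^{-2n};q²)_k (a;q²)_k (b;q²)_k (q^{-1-2n}/(ab);q²)_k q^{2k} / ((q²;q²)_k (q^{-2n}/a;q²)_k (q^{-2n}/b;q²)_k (abq;q²)_k) = Σ_{k=0}^{n+1} (q^{-2n-2};q²)_k (a;q²)_k (b;q²)_k (q^{-1-2n}/(ab);q²)_k q^{2k} / ((q²;q²)_k (q^{-2n}/a;q²)_k (q^{-2n}/b;q²)_k (abq;q²)_k) + [q^{-2n}(1−a)(1−b)(1−q^{-1-2n}/(ab)) / ((1−q^{-2n}/a)(1−q^{-2n}/b)(1−abq))] · Σ_{k=0}^{n} (q^{-2n};q²)_k (aq²;q²)_k (bq²;q²)_k (q^{1-2n}/(ab);q²)_k q^{2k} / ((q²;q²)_k (q^{2-2n}/a;q²)_k (q^{2-2n}/b;q²)_k (abq³;q²)_k). -/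

import Mathlib

/-- The q-shifted factorial `(a; q)ₙ = ∏_{i=0}^{n-1} (1 - a qⁱ)`. -/
noncomputable def qPoch (a q : ℂ) (n : ℕ) : ℂ := ∏ i ∈ Finset.range n, (1 - a * q ^ i)

lemma qPoch_succ (a q : ℂ) (k : ℕ) : qPoch a q (k+1) = qPoch a q k * (1 - a * q ^ k) :=
  Finset.prod_range_succ _ _

lemma qPoch_succ' (a q : ℂ) (k : ℕ) : qPoch a q (k+1) = (1 - a) * qPoch (a*q) q k := by
  unfold qPoch
  rw [Finset.prod_range_succ', pow_zero, mul_one, mul_comm]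
  congr 1
  exact Finset.prod_congr rfl fun i _ => by rw [pow_succ']; ring

set_option maxHeartbeats 2000000 in
lemma term_eq (q a b X : ℂ) (hq : q ≠ 0) (ha : a ≠ 0) (hb : b ≠ 0) (k : ℕ)
    (hd1 : qPoch (q ^ 2) (q ^ 2) (k+1) ≠ 0)
    (hd2 : qPoch (X / a) (q ^ 2) (k+1) ≠ 0)
    (hd3 : qPoch (X / b) (q ^ 2) (k+1) ≠ 0)
    (hd4 : qPoch (a * b * q) (q ^ 2) (k+1) ≠ 0) :
    qPoch X (q^2) (k+1) * qPoch a (q^2) (k+1) * qPoch b (q^2) (k+1) *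
        qPoch (X / q / (a*b)) (q^2) (k+1) * q^(2*(k+1)) /
      (qPoch (q^2) (q^2) (k+1) * qPoch (X/a) (q^2) (k+1) * qPoch (X/b) (q^2) (k+1) *
        qPoch (a*b*q) (q^2) (k+1))
    = qPoch (X / q^2) (q^2) (k+1) * qPoch a (q^2) (k+1) * qPoch b (q^2) (k+1) *
        qPoch (X / q / (a*b)) (q^2) (k+1) * q^(2*(k+1)) /
      (qPoch (q^2) (q^2) (k+1) * qPoch (X/a) (q^2) (k+1) * qPoch (X/b) (q^2) (k+1) *
        qPoch (a*b*q) (q^2) (k+1))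
    + X * (1-a) * (1-b) * (1 - X/q/(a*b)) / ((1 - X/a)*(1 - X/b)*(1-a*b*q)) *
      (qPoch X (q^2) k * qPoch (a*q^2) (q^2) k * qPoch (b*q^2) (q^2) k *
        qPoch (q*X/(a*b)) (q^2) k * q^(2*k) /
       (qPoch (q^2) (q^2) k * qPoch (q^2*X/a) (q^2) k * qPoch (q^2*X/b) (q^2) k *
        qPoch (a*b*q^3) (q^2) k)) := by
  have h2 : (q:ℂ)^2 ≠ 0 := pow_ne_zero 2 hq
  have eX : X / q^2 * q^2 = X := div_mul_cancel₀ _ h2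
  have ec : X / q / (a*b) * q^2 = q * X / (a*b) := by field_simp
  have eA : X / a * q^2 = q^2 * X / a := by field_simp
  have eB : X / b * q^2 = q^2 * X / b := by field_simp
  have eD : a*b*q*q^2 = a*b*q^3 := by ring
  rw [qPoch_succ X (q^2) k, qPoch_succ' a (q^2) k, qPoch_succ' b (q^2) k,
    qPoch_succ' (X/q/(a*b)) (q^2) k, qPoch_succ' (X/q^2) (q^2) k,
    qPoch_succ (q^2) (q^2) k, qPoch_succ' (X/a) (q^2) k, qPoch_succ' (X/b) (q^2) k,
    qPoch_succ' (a*b*q) (q^2) k, eX, ec, eA, eB, eD]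
  rw [qPoch_succ (q^2) (q^2) k] at hd1
  rw [qPoch_succ' (X/a) (q^2) k, eA] at hd2
  rw [qPoch_succ' (X/b) (q^2) k, eB] at hd3
  rw [qPoch_succ' (a*b*q) (q^2) k, eD] at hd4
  have n1 := mul_ne_zero_iff.mp hd1
  have n2 := mul_ne_zero_iff.mp hd2
  have n3 := mul_ne_zero_iff.mp hd3
  have n4 := mul_ne_zero_iff.mp hd4
  obtain ⟨n1a, n1b⟩ := n1
  obtain ⟨n2a, n2b⟩ := n2
  obtain ⟨n3a, n3b⟩ := n3
  obtain ⟨n4a, n4b⟩ := n4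
  have em : q^(2*(k+1)) = q^(2*k)*q^2 := by ring
  rw [em]
  set A1 := qPoch X (q^2) k
  set A2 := qPoch (a*q^2) (q^2) k
  set A3 := qPoch (b*q^2) (q^2) k
  set A4 := qPoch (q*X/(a*b)) (q^2) k
  set A5 := qPoch (q^2) (q^2) k
  set A6 := qPoch (q^2*X/a) (q^2) k
  set A7 := qPoch (q^2*X/b) (q^2) k
  set A8 := qPoch (a*b*q^3) (q^2) k
  set c1 := 1 - X/q/(a*b)
  set w1 := 1 - X/a
  set w2 := 1 - X/b
  set w3 := 1 - a*b*q
  set t := ((q:ℂ)^2)^k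
  set m := q^(2*k)
  have hD : A5 * (1 - q^2*t) * (w1*A6) * (w2*A7) * (w3*A8) ≠ 0 :=
    mul_ne_zero (mul_ne_zero (mul_ne_zero (mul_ne_zero n1a n1b) (mul_ne_zero n2a n2b))
      (mul_ne_zero n3a n3b)) (mul_ne_zero n4a n4b)
  have hE : w1*w2*w3 * (A5*A6*A7*A8) ≠ 0 :=
    mul_ne_zero (mul_ne_zero (mul_ne_zero n2a n3a) n4a)
      (mul_ne_zero (mul_ne_zero (mul_ne_zero n1a n2b) n3b) n4b)
  rw [div_mul_div_comm, div_add_div _ _ hD hE, div_eq_div_iff hD (mul_ne_zero hD hE)]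
  field_simp
  ring


set_option maxHeartbeats 1000000 in
/-- The contiguous relation in `n`, equation (4.6) of the paper. -/
theorem andrews_contiguous_in_n (n : ℕ) (q a b : ℂ) (hq : q ≠ 0) (ha : a ≠ 0) (hb : b ≠ 0)
    (h1 : ∀ k ≤ n + 1, qPoch (q ^ 2) (q ^ 2) k ≠ 0)
    (h2 : ∀ k ≤ n + 1, qPoch (q ^ (-2 * (n : ℤ)) / a) (q ^ 2) k ≠ 0)
    (h3 : ∀ k ≤ n + 1, qPoch (q ^ (-2 * (n : ℤ)) / b) (q ^ 2) k ≠ 0)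
    (h4 : ∀ k ≤ n + 1, qPoch (a * b * q) (q ^ 2) k ≠ 0)
    (h5 : ∀ k ≤ n, qPoch (q ^ (2 - 2 * (n : ℤ)) / a) (q ^ 2) k ≠ 0)
    (h6 : ∀ k ≤ n, qPoch (q ^ (2 - 2 * (n : ℤ)) / b) (q ^ 2) k ≠ 0)
    (h7 : ∀ k ≤ n, qPoch (a * b * q ^ 3) (q ^ 2) k ≠ 0)
    (h8 : 1 - q ^ (-2 * (n : ℤ)) / a ≠ 0) (h9 : 1 - q ^ (-2 * (n : ℤ)) / b ≠ 0)
    (h10 : 1 - a * b * q ≠ 0) :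
    ∑ k ∈ Finset.range (n + 2),
      qPoch (q ^ (-2 * (n : ℤ))) (q ^ 2) k * qPoch a (q ^ 2) k * qPoch b (q ^ 2) k *
          qPoch (q ^ (-1 - 2 * (n : ℤ)) / (a * b)) (q ^ 2) k * q ^ (2 * k) /
        (qPoch (q ^ 2) (q ^ 2) k * qPoch (q ^ (-2 * (n : ℤ)) / a) (q ^ 2) k *
          qPoch (q ^ (-2 * (n : ℤ)) / b) (q ^ 2) k * qPoch (a * b * q) (q ^ 2) k) =
      (∑ k ∈ Finset.range (n + 2),
        qPoch (q ^ (-2 * (n : ℤ) - 2)) (q ^ 2) k * qPoch a (q ^ 2) k * qPoch b (q ^ 2) k *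
            qPoch (q ^ (-1 - 2 * (n : ℤ)) / (a * b)) (q ^ 2) k * q ^ (2 * k) /
          (qPoch (q ^ 2) (q ^ 2) k * qPoch (q ^ (-2 * (n : ℤ)) / a) (q ^ 2) k *
            qPoch (q ^ (-2 * (n : ℤ)) / b) (q ^ 2) k * qPoch (a * b * q) (q ^ 2) k)) +
      q ^ (-2 * (n : ℤ)) * (1 - a) * (1 - b) * (1 - q ^ (-1 - 2 * (n : ℤ)) / (a * b)) /
          ((1 - q ^ (-2 * (n : ℤ)) / a) * (1 - q ^ (-2 * (n : ℤ)) / b) * (1 - a * b * q)) *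
        ∑ k ∈ Finset.range (n + 1),
          qPoch (q ^ (-2 * (n : ℤ))) (q ^ 2) k * qPoch (a * q ^ 2) (q ^ 2) k *
              qPoch (b * q ^ 2) (q ^ 2) k * qPoch (q ^ (1 - 2 * (n : ℤ)) / (a * b)) (q ^ 2) k *
              q ^ (2 * k) /
            (qPoch (q ^ 2) (q ^ 2) k * qPoch (q ^ (2 - 2 * (n : ℤ)) / a) (q ^ 2) k *
              qPoch (q ^ (2 - 2 * (n : ℤ)) / b) (q ^ 2) k *
              qPoch (a * b * q ^ 3) (q ^ 2) k) := by
  have e1 : q ^ (-2 * (n : ℤ) - 2) = q ^ (-2 * (n : ℤ)) / q ^ 2 := by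
    rw [zpow_sub₀ hq]
    norm_cast
  have e2 : q ^ (-1 - 2 * (n : ℤ)) = q ^ (-2 * (n : ℤ)) / q := by
    rw [sub_eq_add_neg, add_comm, zpow_add₀ hq]
    simp [div_eq_mul_inv]
  have e3 : q ^ (1 - 2 * (n : ℤ)) = q * q ^ (-2 * (n : ℤ)) := by
    rw [sub_eq_add_neg, zpow_add₀ hq]
    simp [mul_comm]
  have e4 : q ^ (2 - 2 * (n : ℤ)) = q ^ 2 * q ^ (-2 * (n : ℤ)) := by
    rw [sub_eq_add_neg, zpow_add₀ hq]
    norm_cast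
  set X := q ^ (-2 * (n : ℤ)) with hXdef
  rw [e1, e2, e3, e4]
  have ediv : ∀ k : ℕ, X / q / (a * b) = X / q / (a * b) := fun _ => rfl
  rw [Finset.sum_range_succ' _ (n+1), Finset.sum_range_succ'
    (fun k => qPoch (X / q ^ 2) (q ^ 2) k * qPoch a (q ^ 2) k * qPoch b (q ^ 2) k *
        qPoch (X / q / (a * b)) (q ^ 2) k * q ^ (2 * k) /
      (qPoch (q ^ 2) (q ^ 2) k * qPoch (X / a) (q ^ 2) k *
        qPoch (X / b) (q ^ 2) k * qPoch (a * b * q) (q ^ 2) k)) (n+1)]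
  have step : ∀ k ∈ Finset.range (n+1),
      qPoch X (q^2) (k+1) * qPoch a (q^2) (k+1) * qPoch b (q^2) (k+1) *
          qPoch (X / q / (a*b)) (q^2) (k+1) * q^(2*(k+1)) /
        (qPoch (q^2) (q^2) (k+1) * qPoch (X/a) (q^2) (k+1) * qPoch (X/b) (q^2) (k+1) *
          qPoch (a*b*q) (q^2) (k+1))
      = qPoch (X / q^2) (q^2) (k+1) * qPoch a (q^2) (k+1) * qPoch b (q^2) (k+1) *
          qPoch (X / q / (a*b)) (q^2) (k+1) * q^(2*(k+1)) /
        (qPoch (q^2) (q^2) (k+1) * qPoch (X/a) (q^2) (k+1) * qPoch (X/b) (q^2) (k+1) *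
          qPoch (a*b*q) (q^2) (k+1))
      + X * (1-a) * (1-b) * (1 - X/q/(a*b)) / ((1 - X/a)*(1 - X/b)*(1-a*b*q)) *
        (qPoch X (q^2) k * qPoch (a*q^2) (q^2) k * qPoch (b*q^2) (q^2) k *
          qPoch (q*X/(a*b)) (q^2) k * q^(2*k) /
         (qPoch (q^2) (q^2) k * qPoch (q^2*X/a) (q^2) k * qPoch (q^2*X/b) (q^2) k *
          qPoch (a*b*q^3) (q^2) k)) := by
    intro k hk
    rw [Finset.mem_range] at hk
    exact term_eq q a b X hq ha hb k (h1 (k+1) (by omega)) (h2 (k+1) (by omega))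
      (h3 (k+1) (by omega)) (h4 (k+1) (by omega))
  rw [Finset.sum_congr rfl step, Finset.sum_add_distrib, ← Finset.mul_sum]
  simp [qPoch, mul_comm]
  ring
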